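/- Let O = ⋂_{n∈ℕ⁺} A_{α_n,β_n}. If V is any open unbounded subset of (𝔈, τ) with 0 ∈ V, then V + V ⊄ O, i.e., there exist u, v ∈ V with u + v ∉ O. -/

import Mathlib

noncomputable section

open scoped ENNReal

/-- The ambient Hilbert space `ℓ²` of real square-summable sequences. -/
abbrev ellTwo : Type := lp (fun _ : ℕ => ℝ) 2

/-- Erdős space `𝔈`: the additive subgroup of `ℓ²` consisting of the sequences
all of whose coordinates are rational. -/
def Erdos : AddSubgroup ellTwo where
  carrier := {x | ∀ k, ∃ q : ℚ, (x : ℕ → ℝ) k = (q : ℝ)}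
  add_mem' := by
    intro a b ha hb k
    obtain ⟨p, hp⟩ := ha k
    obtain ⟨q, hq⟩ := hb k
    exact ⟨p + q, by rw [lp.coeFn_add]; simp [hp, hq]⟩
  zero_mem' := fun k => ⟨0, by simp⟩
  neg_mem' := by
    intro a ha k
    obtain ⟨p, hp⟩ := ha k
    exact ⟨-p, by rw [lp.coeFn_neg]; simp [hp]⟩

/-- Erdős space as a type (with the subspace topology and norm inherited from `ℓ²`). -/
abbrev ErdosSpace : Type := ↥Erdos

/-- The coordinates of a point of Erdős space (indexed from `0`, so that the
coordinate `x_k` of the paper is `coords x (k-1)`). -/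
def coords (x : ErdosSpace) : ℕ → ℝ := ((x : ellTwo) : ℕ → ℝ)

/-- `mExists x α` says that `m_{x,α}` exists, i.e. some finite initial sum of squares
of coordinates exceeds `α` (here `m` counts how many initial coordinates are taken). -/
def mExists (x : ErdosSpace) (α : ℝ) : Prop :=
  ∃ m : ℕ, α < Real.sqrt (∑ k ∈ Finset.range m, (coords x k) ^ 2)

/-- `mIndex x α` is the least `m` such that `√(∑_{k<m} x_k²) > α` (and `0` if none exists);
this corresponds to `m_{x,α}` of the paper. -/
def mIndex (x : ErdosSpace) (α : ℝ) : ℕ :=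
  sInf {m : ℕ | α < Real.sqrt (∑ k ∈ Finset.range m, (coords x k) ^ 2)}

/-- The set `A_{α,β}`: those `x` for which either `m_{x,α}` exists and every coordinate
beyond the first `m_{x,α}` ones has absolute value `< β`, or `m_{x,α}` does not exist. -/
def A (α β : ℝ) : Set ErdosSpace :=
  {x | (mExists x α ∧ ∀ l, mIndex x α ≤ l → |coords x l| < β) ∨ ¬mExists x α}


/-- Claim 5: for `O = ⋂ₙ A_{αₙ,βₙ}`, if `V` is open, unbounded and contains `0`,
then `V + V ⊄ O`. -/
theorem VplusV_not_subset_O (a b : ℕ → ℝ) (ha0 : ∀ n, 0 < a n) (haMono : StrictMono a)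
    (haTop : Filter.Tendsto a Filter.atTop Filter.atTop)
    (haIrr : ∀ n, Irrational ((a n) ^ 2))
    (hb0 : ∀ n, 0 < b n) (hbAnti : StrictAnti b)
    (hbLim : Filter.Tendsto b Filter.atTop (nhds 0))
    (hbIrr : ∀ n, Irrational (b n))
    (V : Set ErdosSpace) (hVopen : IsOpen V)
    (hVunb : ∀ M : ℝ, 0 < M → ∃ x ∈ V, M < ‖x‖) (h0V : (0 : ErdosSpace) ∈ V) :
    ∃ u ∈ V, ∃ v ∈ V, u + v ∉ ⋂ n, A (a n) (b n) := by
  classical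
  obtain ⟨ε, hε, hball⟩ := Metric.isOpen_iff.mp hVopen 0 h0V
  obtain ⟨n, hn⟩ := (hbLim.eventually (gt_mem_nhds hε)).exists
  obtain ⟨u, huV, hu⟩ := hVunb (a n) (ha0 n)
  obtain ⟨q, hq1, hq2⟩ := exists_rat_btwn hn
  have hq0 : (0:ℝ) < q := (hb0 n).trans hq1
  have h2 : (0:ℝ) < (2 : ℝ≥0∞).toReal := by norm_num
  have hrw : (fun k => ‖((u : ellTwo) : ℕ → ℝ) k‖ ^ (2 : ℝ≥0∞).toReal)
      = fun k => (coords u k) ^ 2 := by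
    funext k
    rw [show ((2:ℝ≥0∞).toReal) = ((2:ℕ):ℝ) by norm_num, Real.rpow_natCast]
    simp [coords, Real.norm_eq_abs, sq_abs]
  have hsum : Summable (fun k => (coords u k) ^ 2) := by
    have := (lp.memℓp (u : ellTwo)).summable h2
    rwa [hrw] at this
  have htsum : a n ^ 2 < ∑' k, (coords u k) ^ 2 := by
    have h := lp.norm_rpow_eq_tsum h2 (u : ellTwo)
    rw [hrw] at h
    have hnorm : ‖(u : ellTwo)‖ ^ (2 : ℝ≥0∞).toReal = ‖u‖ ^ 2 := by
      rw [show ((2:ℝ≥0∞).toReal) = ((2:ℕ):ℝ) by norm_num, Real.rpow_natCast]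
      rfl
    rw [hnorm] at h
    rw [← h]
    have : 0 < a n := ha0 n
    nlinarith
  obtain ⟨m, hm⟩ := (hsum.hasSum.tendsto_sum_nat.eventually (lt_mem_nhds htsum)).exists
  have habs : Filter.Tendsto (fun k => |coords u k|) Filter.atTop (nhds 0) := by
    have h1 := hsum.tendsto_atTop_zero
    have h2' := (Real.continuous_sqrt.tendsto 0).comp h1
    have heq : ((fun x => Real.sqrt x) ∘ fun k => coords u k ^ 2)
        = fun k => |coords u k| := by
      funext k; simp [Function.comp, Real.sqrt_sq_eq_abs]
    rw [heq] at h2'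
    simpa using h2'
  have hqb : (0:ℝ) < (q:ℝ) - b n := by linarith
  obtain ⟨l, hlsm, hlm⟩ :=
    ((habs.eventually (gt_mem_nhds hqb)).and (Filter.eventually_ge_atTop m)).exists
  -- hlsm : |coords u l| < q - b n, hlm : m ≤ l
  set v0 : ellTwo := lp.single 2 l ((q:ℝ)) with hv0def
  have hv0k : ∀ k, (v0 : ℕ → ℝ) k = if k = l then (q:ℝ) else 0 := by
    intro k
    by_cases hk : k = l
    · subst hk; simp [hv0def, lp.single_apply_self]
    · simp [hv0def, lp.single_apply_ne _ _ _ hk, hk]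
  have hvmem : v0 ∈ Erdos := by
    intro k
    by_cases hk : k = l
    · exact ⟨q, by rw [hv0k]; simp [hk]⟩
    · exact ⟨0, by rw [hv0k]; simp [hk]⟩
  set v : ErdosSpace := ⟨v0, hvmem⟩ with hvdef
  have hvn : ‖v‖ = (q:ℝ) := by
    show ‖v0‖ = (q:ℝ)
    have := lp.norm_single (E := fun _ : ℕ => ℝ) (by norm_num : (0:ℝ≥0∞) < 2) l ((q:ℝ))
    rw [hv0def]
    rw [this]
    exact Real.norm_of_nonneg hq0.le
  have hvV : v ∈ V := by
    apply hball
    simp only [Metric.mem_ball, dist_zero_right, hvn]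
    exact hq2
  have hcoords : ∀ k, coords (u + v) k = coords u k + (v0 : ℕ → ℝ) k := by
    intro k
    simp [coords, AddSubgroup.coe_add, lp.coeFn_add, hvdef]
  have hsum_eq : ∑ k ∈ Finset.range m, coords (u + v) k ^ 2
      = ∑ k ∈ Finset.range m, coords u k ^ 2 := by
    refine Finset.sum_congr rfl fun k hk => ?_
    rw [hcoords k, hv0k k, if_neg, add_zero]
    have := Finset.mem_range.mp hk
    omega
  have hmE : mExists (u + v) (a n) := by
    refine ⟨m, ?_⟩
    rw [hsum_eq, Real.lt_sqrt (ha0 n).le]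
    exact hm
  refine ⟨u, huV, v, hvV, ?_⟩
  intro hO
  have hA := Set.mem_iInter.mp hO n
  rcases hA with ⟨_, hcond⟩ | hne
  · have hidx : mIndex (u + v) (a n) ≤ l := by
      refine le_trans (Nat.sInf_le ?_) hlm
      simp only [Set.mem_setOf_eq]
      rw [hsum_eq, Real.lt_sqrt (ha0 n).le]
      exact hm
    have hlt := hcond l hidx
    rw [hcoords l, hv0k l, if_pos rfl] at hlt
    rw [abs_lt] at hlsm hlt
    linarith [hlsm.1, hlsm.2, hlt.1, hlt.2]
  · exact hne hmE
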